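/- In a resource allocation game with welfare W(a) = Σ_r v_r w(|a|_r), for any two joint actions a, a' and any ζ ≤ n: Σ_{Γ, |Γ|=ζ} W(a'_Γ, a_{-Γ}) = Σ_{r} v_r Σ_{α,β: 0≤α≤e_r, 0≤β≤o_r, α+β≤ζ} C(e_r,α)·C(o_r,β)·C(n−e_r−o_r, ζ−α−β)·w(e_r + x_r + β − α). -/

import Mathlib

open Finset

/-- Number of agents using resource r only in a (and not in a'). -/
def onlyIn {n : ℕ} {R : Type*} [DecidableEq R] (a a' : Fin n → Finset R) (r : R) : ℕ :=
  ((Finset.univ : Finset (Fin n)).filter (fun i => r ∈ a i ∧ r ∉ a' i)).card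

/-- Number of agents using resource r in both a and a'. -/
def inBoth {n : ℕ} {R : Type*} [DecidableEq R] (a a' : Fin n → Finset R) (r : R) : ℕ :=
  ((Finset.univ : Finset (Fin n)).filter (fun i => r ∈ a i ∧ r ∈ a' i)).card

/-- coalition-sum expansion of welfare in resource allocation games:
Σ_{|Γ|=ζ} W(a'_Γ, a_{−Γ}) = Σ_r v_r Σ_{α≤e_r, β≤o_r, α+β≤ζ}
  C(e_r,α)C(o_r,β)C(n−e_r−o_r, ζ−α−β) · w(e_r + x_r + β − α). -/
lemma fiber_card {γ : Type*} [DecidableEq γ] (u s t : Finset γ) (hsu : s ⊆ u)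
    (htu : t ⊆ u) (hst : Disjoint s t) (ζ α β : ℕ) (hab : α + β ≤ ζ) :
    ((Finset.powersetCard ζ u).filter
        (fun Γ => (Γ ∩ s).card = α ∧ (Γ ∩ t).card = β)).card
      = s.card.choose α * t.card.choose β *
          (u.card - s.card - t.card).choose (ζ - α - β) := by
  have hcu : (u \ (s ∪ t)).card = u.card - s.card - t.card := by
    rw [card_sdiff_of_subset (union_subset hsu htu), card_union_of_disjoint hst]
    omega
  have hkey : ((Finset.powersetCard ζ u).filter
        (fun Γ => (Γ ∩ s).card = α ∧ (Γ ∩ t).card = β)).card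
      = ((powersetCard α s) ×ˢ (powersetCard β t) ×ˢ
          (powersetCard (ζ - α - β) (u \ (s ∪ t)))).card := by
    apply Finset.card_bij' (fun Γ _ => (Γ ∩ s, Γ ∩ t, Γ \ (s ∪ t)))
      (fun p _ => p.1 ∪ p.2.1 ∪ p.2.2)
    · intro Γ hΓ
      simp only [mem_filter, mem_powersetCard] at hΓ
      obtain ⟨⟨hΓu, hΓc⟩, hα, hβ⟩ := hΓ
      have h1 : (Γ ∩ (s ∪ t)).card = α + β := by
        rw [inter_union_distrib_left, card_union_of_disjoint
          (hst.mono inter_subset_right inter_subset_right), hα, hβ]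
      have h2 : (Γ ∩ (s ∪ t)).card + (Γ \ (s ∪ t)).card = ζ := by
        rw [card_inter_add_card_sdiff, hΓc]
      simp only [mem_product, mem_powersetCard]
      refine ⟨⟨inter_subset_right, hα⟩, ⟨inter_subset_right, hβ⟩,
        sdiff_subset_sdiff hΓu le_rfl, ?_⟩
      omega
    · intro p hp
      simp only [mem_product, mem_powersetCard] at hp
      obtain ⟨⟨hAs, hAc⟩, ⟨hBt, hBc⟩, hCu, hCc⟩ := hp
      have hA : ∀ x ∈ p.1, x ∈ s := fun x hx => hAs hx
      have hB : ∀ x ∈ p.2.1, x ∈ t := fun x hx => hBt hx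
      have hC : ∀ x ∈ p.2.2, x ∈ u ∧ x ∉ s ∧ x ∉ t := by
        intro x hx
        have := hCu hx
        simp only [mem_sdiff, mem_union] at this
        tauto
      have hst' : ∀ x ∈ s, x ∉ t := fun x hx => disjoint_left.mp hst hx
      have hAB : Disjoint p.1 p.2.1 := hst.mono hAs hBt
      have hABC : Disjoint (p.1 ∪ p.2.1) p.2.2 := by
        rw [disjoint_left]
        intro x hx hx'
        have := hC x hx'
        simp only [mem_union] at hx
        rcases hx with h | h
        · exact this.2.1 (hA x h)
        · exact this.2.2 (hB x h)
      simp only [mem_filter, mem_powersetCard]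
      refine ⟨⟨?_, ?_⟩, ?_, ?_⟩
      · intro x hx
        simp only [mem_union] at hx
        rcases hx with (h | h) | h
        · exact hsu (hA x h)
        · exact htu (hB x h)
        · exact (hC x h).1
      · rw [card_union_of_disjoint hABC, card_union_of_disjoint hAB, hAc, hBc, hCc]
        omega
      · rw [← hAc]; congr 1
        ext x
        simp only [mem_inter, mem_union]
        constructor
        · rintro ⟨(h | h) | h, hx⟩
          · exact h
          · exact absurd (hB x h) (hst' x hx)
          · exact absurd hx (hC x h).2.1
        · intro h; exact ⟨Or.inl (Or.inl h), hA x h⟩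
      · rw [← hBc]; congr 1
        ext x
        simp only [mem_inter, mem_union]
        constructor
        · rintro ⟨(h | h) | h, hx⟩
          · exact absurd hx (hst' x (hA x h))
          · exact h
          · exact absurd hx (hC x h).2.2
        · intro h; exact ⟨Or.inl (Or.inr h), hB x h⟩
    · intro Γ hΓ
      simp only [mem_filter, mem_powersetCard] at hΓ
      ext x
      simp only [mem_union, mem_inter, mem_sdiff]
      tauto
    · intro p hp
      simp only [mem_product, mem_powersetCard] at hp
      obtain ⟨⟨hAs, hAc⟩, ⟨hBt, hBc⟩, hCu, hCc⟩ := hp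
      have hC : ∀ x ∈ p.2.2, x ∉ s ∧ x ∉ t := by
        intro x hx
        have := hCu hx
        simp only [mem_sdiff, mem_union] at this
        tauto
      have hst' : ∀ x ∈ s, x ∉ t := fun x hx => disjoint_left.mp hst hx
      have e1 : (p.1 ∪ p.2.1 ∪ p.2.2) ∩ s = p.1 := by
        ext x
        simp only [mem_inter, mem_union]
        constructor
        · rintro ⟨(h | h) | h, hx⟩
          · exact h
          · exact absurd hx (fun hxs => hst' x hxs (hBt h))
          · exact absurd hx (hC x h).1
        · intro h; exact ⟨Or.inl (Or.inl h), hAs h⟩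
      have e2 : (p.1 ∪ p.2.1 ∪ p.2.2) ∩ t = p.2.1 := by
        ext x
        simp only [mem_inter, mem_union]
        constructor
        · rintro ⟨(h | h) | h, hx⟩
          · exact absurd hx (hst' x (hAs h))
          · exact h
          · exact absurd hx (hC x h).2
        · intro h; exact ⟨Or.inl (Or.inr h), hBt h⟩
      have e3 : (p.1 ∪ p.2.1 ∪ p.2.2) \ (s ∪ t) = p.2.2 := by
        ext x
        simp only [mem_sdiff, mem_union]
        constructor
        · rintro ⟨(h | h) | h, hx⟩
          · exact absurd (Or.inl (hAs h)) hx
          · exact absurd (Or.inr (hBt h)) hx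
          · exact h
        · intro h
          exact ⟨Or.inr h, fun h' => h'.elim (hC x h).1 (hC x h).2⟩
      exact Prod.ext e1 (Prod.ext e2 e3)
  rw [hkey, card_product, card_product, card_powersetCard, card_powersetCard,
    card_powersetCard, hcu, mul_assoc]

theorem stmt_8 {n : ℕ} {R : Type*} [Fintype R] [DecidableEq R]
    (v : R → ℝ) (w : ℕ → ℝ) (a a' : Fin n → Finset R) (ζ : ℕ) (hζ : ζ ≤ n) :
    ∑ Γ ∈ Finset.powersetCard ζ (Finset.univ : Finset (Fin n)),
        ∑ r : R, v r *
          w ((Finset.univ.filter (fun i : Fin n =>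
              r ∈ (if i ∈ Γ then a' i else a i))).card)
      = ∑ r : R, v r *
          ∑ α ∈ Finset.range (onlyIn a a' r + 1),
            ∑ β ∈ Finset.range (onlyIn a' a r + 1),
              (if α + β ≤ ζ then
                ((onlyIn a a' r).choose α * (onlyIn a' a r).choose β *
                  (n - onlyIn a a' r - onlyIn a' a r).choose (ζ - α - β) : ℝ) *
                  w (onlyIn a a' r + inBoth a a' r + β - α)
               else 0) := by
  rw [Finset.sum_comm]
  refine Finset.sum_congr rfl fun r _ => ?_
  rw [← Finset.mul_sum]
  congr 1
  set E := (Finset.univ : Finset (Fin n)).filter (fun i => r ∈ a i ∧ r ∉ a' i) with hE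
  set O := (Finset.univ : Finset (Fin n)).filter (fun i => r ∈ a' i ∧ r ∉ a i) with hO
  set X := (Finset.univ : Finset (Fin n)).filter (fun i => r ∈ a i ∧ r ∈ a' i) with hX
  have heq1 : onlyIn a a' r = E.card := rfl
  have heq2 : onlyIn a' a r = O.card := rfl
  have heq3 : inBoth a a' r = X.card := rfl
  have hEO : Disjoint E O := by
    rw [Finset.disjoint_left]
    intro i hi hi'
    simp only [hE, hO, mem_filter] at hi hi'
    tauto
  have hcount : ∀ Γ ∈ Finset.powersetCard ζ (Finset.univ : Finset (Fin n)),
      ((Finset.univ : Finset (Fin n)).filter (fun i : Fin n =>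
          r ∈ (if i ∈ Γ then a' i else a i))).card
        = (E.card - (Γ ∩ E).card) + X.card + (Γ ∩ O).card := by
    intro Γ _
    have hset : (Finset.univ : Finset (Fin n)).filter (fun i : Fin n =>
          r ∈ (if i ∈ Γ then a' i else a i))
        = (E \ Γ) ∪ (X ∪ (O ∩ Γ)) := by
      ext i
      simp only [mem_filter, mem_union, mem_sdiff, mem_inter, mem_univ, true_and,
        hE, hO, hX]
      by_cases h : i ∈ Γ <;> simp [h] <;> tauto
    have hd1 : Disjoint X (O ∩ Γ) := by
      rw [Finset.disjoint_left]
      intro i hi hi'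
      simp only [hX, hO, mem_filter, mem_inter] at hi hi'
      tauto
    have hd2 : Disjoint (E \ Γ) (X ∪ (O ∩ Γ)) := by
      rw [Finset.disjoint_left]
      intro i hi hi'
      simp only [hE, hO, hX, mem_sdiff, mem_filter, mem_union, mem_inter] at hi hi'
      tauto
    have hsd : (E ∩ Γ).card + (E \ Γ).card = E.card := card_inter_add_card_sdiff E Γ
    rw [hset, card_union_of_disjoint hd2, card_union_of_disjoint hd1,
      inter_comm Γ E, inter_comm Γ O]
    omega
  have hmaps : ∀ Γ ∈ Finset.powersetCard ζ (Finset.univ : Finset (Fin n)),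
      ((Γ ∩ E).card, (Γ ∩ O).card) ∈
        Finset.range (E.card + 1) ×ˢ Finset.range (O.card + 1) := by
    intro Γ _
    simp only [Finset.mem_product, Finset.mem_range]
    exact ⟨Nat.lt_succ_of_le (card_le_card inter_subset_right),
      Nat.lt_succ_of_le (card_le_card inter_subset_right)⟩
  rw [← Finset.sum_fiberwise_of_maps_to hmaps
      (fun Γ => w (((Finset.univ : Finset (Fin n)).filter (fun i : Fin n =>
          r ∈ (if i ∈ Γ then a' i else a i))).card)),
    Finset.sum_product, heq1, heq2, heq3]
  refine Finset.sum_congr rfl fun α hα => Finset.sum_congr rfl fun β hβ => ?_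
  rw [Finset.mem_range] at hα hβ
  have hαE : α ≤ E.card := by omega
  have hconst : ∀ Γ ∈ (Finset.powersetCard ζ (Finset.univ : Finset (Fin n))).filter
      (fun Γ => ((Γ ∩ E).card, (Γ ∩ O).card) = (α, β)),
      w (((Finset.univ : Finset (Fin n)).filter (fun i : Fin n =>
          r ∈ (if i ∈ Γ then a' i else a i))).card)
        = w (E.card + X.card + β - α) := by
    intro Γ hΓ
    rw [Finset.mem_filter] at hΓ
    obtain ⟨hΓ1, hΓ2⟩ := hΓ
    rw [Prod.mk.injEq] at hΓ2
    rw [hcount Γ hΓ1, hΓ2.1, hΓ2.2]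
    congr 1
    omega
  rw [Finset.sum_congr rfl hconst, Finset.sum_const, nsmul_eq_mul]
  by_cases hab : α + β ≤ ζ
  · rw [if_pos hab]
    have hfilt : (Finset.powersetCard ζ (Finset.univ : Finset (Fin n))).filter
        (fun Γ => ((Γ ∩ E).card, (Γ ∩ O).card) = (α, β))
        = (Finset.powersetCard ζ (Finset.univ : Finset (Fin n))).filter
        (fun Γ => (Γ ∩ E).card = α ∧ (Γ ∩ O).card = β) := by
      apply Finset.filter_congr
      intro Γ _
      simp [Prod.ext_iff]
    rw [hfilt, fiber_card _ _ _ (subset_univ E) (subset_univ O) hEO ζ α β hab]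
    rw [Finset.card_univ, Fintype.card_fin]
    push_cast
    ring
  · rw [if_neg hab]
    have hempty : (Finset.powersetCard ζ (Finset.univ : Finset (Fin n))).filter
        (fun Γ => ((Γ ∩ E).card, (Γ ∩ O).card) = (α, β)) = ∅ := by
      rw [Finset.filter_eq_empty_iff]
      intro Γ hΓ hc
      rw [Prod.mk.injEq] at hc
      rw [Finset.mem_powersetCard] at hΓ
      have h1 : (Γ ∩ E).card + (Γ ∩ O).card ≤ Γ.card := by
        rw [← card_union_of_disjoint (hEO.mono inter_subset_right inter_subset_right)]
        exact card_le_card (union_subset inter_subset_left inter_subset_left)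
      omega
    rw [hempty]
    simp
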